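/- Let G be a connected split graph whose vertex set is partitioned into a clique C with |C| = k ≥ 3 and a nonempty independent set I such that every vertex of I is non-adjacent to at least one vertex of C. Then G admits a strong conflict-free vertex-connection k-coloring, and svcfc(G) = k. -/

import Mathlib

open SimpleGraph

/-- `f` is a strong conflict-free vertex-connection coloring of `G`: any two distinct
vertices are joined by a shortest path on which some color occurs exactly once. -/
def IsSCFVC {V α : Type*} [DecidableEq α] (G : SimpleGraph V) (f : V → α) : Prop :=
  ∀ u v : V, u ≠ v → ∃ p : G.Walk u v, p.length = G.dist u v ∧
    ∃ c : α, (p.support.map f).count c = 1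

/-- The strong conflict-free vertex-connection number. -/
noncomputable def svcfc {V : Type*} (G : SimpleGraph V) : ℕ :=
  sInf {k | ∃ f : V → Fin k, IsSCFVC G f}

lemma cnt2 {α : Type*} [DecidableEq α] (a b : α) (h : a ≠ b) : ([a,b]).count a = 1 := by
  simp [List.count_cons, h.symm]

lemma cnt3mid {α : Type*} [DecidableEq α] (a b c : α) (h1 : b ≠ a) (h2 : b ≠ c) :
    ([a,b,c]).count b = 1 := by
  simp [List.count_cons, h1.symm, h2.symm]

lemma cnt4snd {α : Type*} [DecidableEq α] (a b c d : α) (h1 : b ≠ a) (h2 : b ≠ c) (h3 : b ≠ d) :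
    ([a,b,c,d]).count b = 1 := by
  simp [List.count_cons, h1.symm, h2.symm, h3.symm]

lemma cnt4thd {α : Type*} [DecidableEq α] (a b c d : α) (h1 : c ≠ a) (h2 : c ≠ b) (h3 : c ≠ d) :
    ([a,b,c,d]).count c = 1 := by
  simp [List.count_cons, h1.symm, h2.symm, h3.symm]

lemma cnt2same {α : Type*} [DecidableEq α] (a c : α) : ([a,a]).count c ≠ 1 := by
  rcases eq_or_ne a c with h | h <;> simp [List.count_cons, h]

lemma support_of_length_one {V : Type*} {G : SimpleGraph V} {u v : V} (p : G.Walk u v)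
    (h : p.length = 1) : p.support = [u, v] := by
  cases p with
  | nil => simp at h
  | cons h1 q =>
    cases q with
    | nil => simp
    | cons h2 r => simp [SimpleGraph.Walk.length_cons] at h

lemma exists_mid_of_length_two {V : Type*} {G : SimpleGraph V} {u v : V} (p : G.Walk u v)
    (h : p.length = 2) : ∃ w, G.Adj u w ∧ G.Adj w v := by
  cases p with
  | nil => simp at h
  | cons h1 q =>
    cases q with
    | nil => simp at h
    | cons h2 r =>
      cases r with
      | nil => exact ⟨_, h1, h2⟩
      | cons h3 s => simp [SimpleGraph.Walk.length_cons] at h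

/-- A connected split graph with a partition into a clique `C` of size `k ≥ 3` and a
nonempty independent set `I` in which every vertex of `I` misses some vertex of `C`
admits a strong conflict-free vertex-connection `k`-coloring, and `svcfc(G) = k`. -/
theorem stmt15 {V : Type*} [Fintype V] [DecidableEq V] (G : SimpleGraph V)
    (hG : G.Connected) (C I : Finset V)
    (hdisj : Disjoint C I) (huniv : C ∪ I = Finset.univ)
    (hclique : ∀ u ∈ C, ∀ v ∈ C, u ≠ v → G.Adj u v)
    (hindep : ∀ u ∈ I, ∀ v ∈ I, ¬ G.Adj u v)
    (hIne : I.Nonempty)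
    (hmiss : ∀ u ∈ I, ∃ v ∈ C, ¬ G.Adj u v)
    (k : ℕ) (hk : C.card = k) (hk3 : 3 ≤ k) :
    (∃ f : V → Fin k, IsSCFVC G f) ∧ svcfc G = k := by
  classical
  haveI : NeZero k := ⟨by omega⟩
  have hm1 : 1 % k = 1 := Nat.mod_eq_of_lt (by omega)
  have hm2 : 2 % k = 2 := Nat.mod_eq_of_lt (by omega)
  have hCne : C.Nonempty := by rw [← Finset.card_pos, hk]; omega
  have hmemI : ∀ v : V, v ∉ C → v ∈ I := by
    intro v hv
    have h := Finset.mem_univ v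
    rw [← huniv, Finset.mem_union] at h
    tauto
  have hnotC : ∀ v ∈ I, v ∉ C := fun v hv hc => Finset.disjoint_left.mp hdisj hc hv
  -- the equivalence / coloring setup
  let e : {x // x ∈ C} ≃ Fin k := (C.equivFin).trans (finCongr hk)
  let g : {x // x ∈ C} → {x // x ∈ C} := fun a => e.symm (e a + 1)
  have hg_ne : ∀ a, g a ≠ a := by
    intro a h
    have h2 : e a + 1 = e a := by
      conv_rhs => rw [← h]
      simp [g]
    have h3 : (1 : Fin k) = 0 := by
      have : e a + 1 = e a + 0 := by rw [h2, add_zero]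
      exact add_left_cancel this
    rw [Fin.ext_iff, Fin.val_one', Fin.val_zero, hm1] at h3
    omega
  have hg_no2 : ∀ a, g (g a) ≠ a := by
    intro a h
    have h2 : e a + 1 + 1 = e a := by
      conv_rhs => rw [← h]
      simp [g]
    have h3 : (1 + 1 : Fin k) = 0 := by
      have : e a + (1 + 1) = e a + 0 := by rw [← add_assoc, h2, add_zero]
      exact add_left_cancel this
    rw [Fin.ext_iff, Fin.val_add, Fin.val_one', Fin.val_zero, hm1] at h3
    norm_num [hm2] at h3
  -- neighbors of independent vertices lie in C
  have hnbrC : ∀ v ∈ I, ∀ w, G.Adj v w → w ∈ C := by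
    intro v hv w hw
    by_contra hwc
    exact hindep v hv w (hmemI w hwc) hw
  have hnbr_ex : ∀ v ∈ I, ∃ w, G.Adj v w := by
    intro v hv
    obtain ⟨c0, hc0⟩ := hCne
    have hne : v ≠ c0 := fun h => hnotC v hv (h ▸ hc0)
    obtain ⟨p⟩ := hG.preconnected v c0
    cases p with
    | nil => exact absurd rfl hne
    | cons h q => exact ⟨_, h⟩
  -- the choice of a non-neighbor in C for each vertex
  let X : V → {x // x ∈ C} := fun v =>
    if h1 : ∃ a : {x // x ∈ C}, ∀ w, G.Adj v w → w = ↑a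
    then g h1.choose
    else if h2 : ∃ a : {x // x ∈ C}, ¬ G.Adj v ↑a then h2.choose
    else e.symm 0
  have hX_nonadj : ∀ v ∈ I, ¬ G.Adj v ↑(X v) := by
    intro v hv
    by_cases h1 : ∃ a : {x // x ∈ C}, ∀ w, G.Adj v w → w = ↑a
    · simp only [X, dif_pos h1]
      intro hadj
      have := h1.choose_spec _ hadj
      have heq : g h1.choose = h1.choose := Subtype.ext this
      exact hg_ne _ heq
    · have h2 : ∃ a : {x // x ∈ C}, ¬ G.Adj v ↑a := by
        obtain ⟨a, ha, hna⟩ := hmiss v hv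
        exact ⟨⟨a, ha⟩, hna⟩
      simp only [X, dif_neg h1, dif_pos h2]
      exact h2.choose_spec
  have hX_pendant : ∀ v : V, ∀ a : {x // x ∈ C}, (∃ w, G.Adj v w) →
      (∀ w, G.Adj v w → w = ↑a) → X v = g a := by
    intro v a hex hall
    have h1 : ∃ a : {x // x ∈ C}, ∀ w, G.Adj v w → w = ↑a := ⟨a, hall⟩
    simp only [X, dif_pos h1]
    congr 1
    obtain ⟨w0, hw0⟩ := hex
    have e1 := h1.choose_spec _ hw0
    have e2 := hall _ hw0
    exact Subtype.ext (by rw [← e1, ← e2])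
  -- the coloring
  let f : V → Fin k := fun v => if hv : v ∈ C then e ⟨v, hv⟩ else e (X v)
  have fC : ∀ (a : V) (ha : a ∈ C), f a = e ⟨a, ha⟩ := by
    intro a ha; simp only [f, dif_pos ha]
  have fI : ∀ (v : V), v ∉ C → f v = e (X v) := by
    intro v hv; simp only [f, dif_neg hv]
  have injC : ∀ a ∈ C, ∀ b ∈ C, a ≠ b → f a ≠ f b := by
    intro a ha b hb hab h
    rw [fC a ha, fC b hb] at h
    exact hab (congrArg Subtype.val (e.injective h))
  have f_eq_iffI : ∀ (a : V) (ha : a ∈ C) (v : V) (hv : v ∉ C), f a = f v ↔ a = ↑(X v) := by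
    intro a ha v hv
    rw [fC a ha, fI v hv]
    constructor
    · intro h; exact congrArg Subtype.val (e.injective h)
    · intro h; congr 1; exact Subtype.ext h
  -- distance facts
  have hdist1 : ∀ u v : V, G.Adj u v → G.dist u v = 1 := fun u v h =>
    SimpleGraph.dist_eq_one_iff_adj.mpr h
  have hdist2 : ∀ u v : V, u ≠ v → ¬ G.Adj u v → ∀ w, G.Adj u w → G.Adj w v →
      G.dist u v = 2 := by
    intro u v huv hnadj w h1 h2
    have hle : G.dist u v ≤ 2 := by
      have := SimpleGraph.dist_le (SimpleGraph.Walk.cons h1 (SimpleGraph.Walk.cons h2 SimpleGraph.Walk.nil))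
      simpa using this
    have hpos : 0 < G.dist u v := hG.pos_dist_of_ne huv
    have hne1 : G.dist u v ≠ 1 := fun h => hnadj (SimpleGraph.dist_eq_one_iff_adj.mp h)
    omega
  have hdist3 : ∀ u v : V, u ≠ v → ¬ G.Adj u v → (¬ ∃ w, G.Adj u w ∧ G.Adj w v) →
      ∀ a b, G.Adj u a → G.Adj a b → G.Adj b v → G.dist u v = 3 := by
    intro u v huv hnadj hnocomm a b h1 h2 h3
    have hle : G.dist u v ≤ 3 := by
      have := SimpleGraph.dist_le (SimpleGraph.Walk.cons h1 (SimpleGraph.Walk.cons h2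
        (SimpleGraph.Walk.cons h3 SimpleGraph.Walk.nil)))
      simpa using this
    have hpos : 0 < G.dist u v := hG.pos_dist_of_ne huv
    have hne1 : G.dist u v ≠ 1 := fun h => hnadj (SimpleGraph.dist_eq_one_iff_adj.mp h)
    have hne2 : G.dist u v ≠ 2 := by
      intro h
      obtain ⟨p, hp⟩ := (hG.preconnected u v).exists_walk_length_eq_dist
      rw [h] at hp
      exact hnocomm (exists_mid_of_length_two p hp)
    omega
  -- the main coloring lemma, asymmetric version: handles all cases up to symmetry
  have main : ∀ u v : V, u ≠ v → (u ∈ C ∨ (u ∉ C ∧ v ∉ C)) →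
      ∃ p : G.Walk u v, p.length = G.dist u v ∧ ∃ c : Fin k, (p.support.map f).count c = 1 := by
    intro u v huv hcase
    rcases hcase with hu | ⟨hu, hv⟩
    · by_cases hv : v ∈ C
      · -- both endpoints in the clique
        have hadj := hclique u hu v hv huv
        refine ⟨SimpleGraph.Walk.cons hadj SimpleGraph.Walk.nil, by simp [hdist1 u v hadj], f u, ?_⟩
        simp only [SimpleGraph.Walk.support_cons, SimpleGraph.Walk.support_nil,
          List.map_cons, List.map_nil]
        exact cnt2 (f u) (f v) (injC u hu v hv huv)
      · -- u in the clique, v independent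
        have hvI := hmemI v hv
        have hXv := hX_nonadj v hvI
        by_cases hadj : G.Adj u v
        · refine ⟨SimpleGraph.Walk.cons hadj SimpleGraph.Walk.nil, by simp [hdist1 u v hadj], f u, ?_⟩
          simp only [SimpleGraph.Walk.support_cons, SimpleGraph.Walk.support_nil,
            List.map_cons, List.map_nil]
          refine cnt2 (f u) (f v) fun hh => ?_
          have := (f_eq_iffI u hu v hv).mp hh
          rw [this] at hadj
          exact hXv hadj.symm
        · obtain ⟨w, hw⟩ := hnbr_ex v hvI
          have hwC := hnbrC v hvI w hw
          have hwu : w ≠ u := fun h => hadj (h ▸ hw).symm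
          have h1 : G.Adj u w := hclique u hu w hwC hwu.symm
          have h2 : G.Adj w v := hw.symm
          refine ⟨SimpleGraph.Walk.cons h1 (SimpleGraph.Walk.cons h2 SimpleGraph.Walk.nil),
            by simp [hdist2 u v huv hadj w h1 h2], f w, ?_⟩
          simp only [SimpleGraph.Walk.support_cons, SimpleGraph.Walk.support_nil,
            List.map_cons, List.map_nil]
          refine cnt3mid (f u) (f w) (f v) (injC w hwC u hu hwu) fun hh => ?_
          have := (f_eq_iffI w hwC v hv).mp hh
          rw [this] at hw
          exact hXv hw
    · -- both endpoints independent
      have huI := hmemI u hu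
      have hvI := hmemI v hv
      have hXu := hX_nonadj u huI
      have hXv := hX_nonadj v hvI
      have hnadj : ¬ G.Adj u v := hindep u huI v hvI
      by_cases hcomm : ∃ w, G.Adj u w ∧ G.Adj w v
      · obtain ⟨w, h1, h2⟩ := hcomm
        have hwC := hnbrC u huI w h1
        refine ⟨SimpleGraph.Walk.cons h1 (SimpleGraph.Walk.cons h2 SimpleGraph.Walk.nil),
          by simp [hdist2 u v huv hnadj w h1 h2], f w, ?_⟩
        simp only [SimpleGraph.Walk.support_cons, SimpleGraph.Walk.support_nil,
          List.map_cons, List.map_nil]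
        refine cnt3mid (f u) (f w) (f v) (fun hh => ?_) (fun hh => ?_)
        · have := (f_eq_iffI w hwC u hu).mp hh
          rw [this] at h1
          exact hXu h1
        · have := (f_eq_iffI w hwC v hv).mp hh
          rw [this] at h2
          exact hXv h2.symm
      · -- distance three
        have hstep : ∃ a b : V, G.Adj u a ∧ G.Adj v b ∧ a ≠ b ∧ a ∈ C ∧ b ∈ C ∧
            (a ≠ ↑(X v) ∨ b ≠ ↑(X u)) := by
          by_cases hA : ∃ wa, G.Adj u wa ∧ wa ≠ ↑(X v)
          · obtain ⟨a, hua, haX⟩ := hA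
            obtain ⟨b, hvb⟩ := hnbr_ex v hvI
            have hab : a ≠ b := fun h => hcomm ⟨a, hua, (h ▸ hvb).symm⟩
            exact ⟨a, b, hua, hvb, hab, hnbrC u huI a hua, hnbrC v hvI b hvb, Or.inl haX⟩
          · push_neg at hA
            have hexu := hnbr_ex u huI
            have hXu2 : X u = g (X v) := hX_pendant u (X v) hexu (fun w hw => hA w hw)
            have huXv : G.Adj u ↑(X v) := by
              obtain ⟨w0, hw0⟩ := hexu
              rwa [hA w0 hw0] at hw0
            by_cases hB : ∃ wb, G.Adj v wb ∧ wb ≠ ↑(X u)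
            · obtain ⟨b, hvb, hbX⟩ := hB
              have hab : (↑(X v) : V) ≠ b := fun h => hcomm ⟨↑(X v), huXv, (h ▸ hvb).symm⟩
              exact ⟨↑(X v), b, huXv, hvb, hab, (X v).2, hnbrC v hvI b hvb, Or.inr hbX⟩
            · push_neg at hB
              exfalso
              have hexv := hnbr_ex v hvI
              have hXv2 : X v = g (X u) := hX_pendant v (X u) hexv (fun w hw => hB w hw)
              rw [hXu2] at hXv2
              exact hg_no2 (X v) hXv2.symm
        obtain ⟨a, b, hua, hvb, hab, haC, hbC, hor⟩ := hstep
        have h2 : G.Adj a b := hclique a haC b hbC hab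
        have h3 : G.Adj b v := hvb.symm
        have hd := hdist3 u v huv hnadj hcomm a b hua h2 h3
        have hfa_ne_fu : f a ≠ f u := fun hh => by
          have := (f_eq_iffI a haC u hu).mp hh
          rw [this] at hua
          exact hXu hua
        have hfb_ne_fv : f b ≠ f v := fun hh => by
          have := (f_eq_iffI b hbC v hv).mp hh
          rw [this] at hvb
          exact hXv hvb
        have hfab : f a ≠ f b := injC a haC b hbC hab
        refine ⟨SimpleGraph.Walk.cons hua (SimpleGraph.Walk.cons h2
          (SimpleGraph.Walk.cons h3 SimpleGraph.Walk.nil)), by simp [hd], ?_⟩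
        simp only [SimpleGraph.Walk.support_cons, SimpleGraph.Walk.support_nil,
          List.map_cons, List.map_nil]
        rcases hor with h | h
        · have hfa_ne_fv : f a ≠ f v := fun hh => h ((f_eq_iffI a haC v hv).mp hh)
          exact ⟨f a, cnt4snd (f u) (f a) (f b) (f v) hfa_ne_fu hfab hfa_ne_fv⟩
        · have hfb_ne_fu : f b ≠ f u := fun hh => h ((f_eq_iffI b hbC u hu).mp hh)
          exact ⟨f b, cnt4thd (f u) (f a) (f b) (f v) hfb_ne_fu hfab.symm hfb_ne_fv⟩
  have hSC : IsSCFVC G f := by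
    intro u v huv
    by_cases hu : u ∈ C
    · exact main u v huv (Or.inl hu)
    · by_cases hv : v ∈ C
      · obtain ⟨p, hp, c, hc⟩ := main v u huv.symm (Or.inl hv)
        refine ⟨p.reverse, ?_, c, ?_⟩
        · rw [SimpleGraph.Walk.length_reverse, hp, SimpleGraph.dist_comm]
        · rw [SimpleGraph.Walk.support_reverse, List.map_reverse, List.count_reverse]
          exact hc
      · exact main u v huv (Or.inr ⟨hu, hv⟩)
  -- lower bound
  have hlb : ∀ j, (∃ f : V → Fin j, IsSCFVC G f) → k ≤ j := by
    rintro j ⟨f', hf'⟩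
    have hinj : ∀ a ∈ C, ∀ b ∈ C, f' a = f' b → a = b := by
      intro a ha b hb hab
      by_contra hne
      obtain ⟨p, hl, c, hc⟩ := hf' a b hne
      rw [hdist1 a b (hclique _ ha _ hb hne)] at hl
      rw [support_of_length_one p hl] at hc
      simp only [List.map_cons, List.map_nil, hab] at hc
      exact cnt2same (f' b) c hc
    have := Finset.card_le_card_of_injOn f' (fun a _ => Finset.mem_univ (f' a))
      (fun a ha b hb => hinj a ha b hb)
    rw [hk] at this
    simpa using this
  have hmemS : k ∈ {j | ∃ f : V → Fin j, IsSCFVC G f} := ⟨f, hSC⟩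
  refine ⟨⟨f, hSC⟩, le_antisymm (Nat.sInf_le hmemS) (le_csInf ⟨k, hmemS⟩ fun j hj => hlb j hj)⟩
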